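/- Let a and n be integers with a ≥ 5, n ≥ 3, a(n−2) ≥ 8n−2, and either (a ≡ 1 and n ≡ 0 (mod 4)), or (a ≡ 2 (mod 4) and n odd), or (a ≡ 3 and n ≡ 0 (mod 4)). Then the Sylvester number (genus) of the triple {S_{a,n}, S_{a,n+1}, S_{a,n+2}} equals (1/8)·((a²+16a)n³ − (12a+16)n² − (4a²+14a−20)n + 4a − 4). -/

import Mathlib

/-- The 2-step star number `S_{a,n} = a·n·(n−2) + 1`. -/
def twoStepStar (a n : ℕ) : ℕ := a * n * (n - 2) + 1

/-- The Sylvester number (genus) of a set `A` of natural numbers: the number of nonnegative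
integers that are not a nonnegative integer linear combination of elements of `A`. -/
noncomputable def sylvesterNumber (A : Set ℕ) : ℕ :=
  Set.ncard {m : ℕ | m ∉ AddSubmonoid.closure A}


private lemma Lcop (d : ℤ) : IsCoprime (2*d+3) (4*d+8) := ⟨2*d+3, -(d+1), by ring⟩

private lemma L1 (a d s1 A x y x' y' : ℤ) (ha : 5 ≤ a) (hd : 1 ≤ d)
    (hA : A = a*(d+2)*d+1) (h4 : a*d+2 = 4*(s1+2*d+4))
    (hx : 0 ≤ x) (hx1 : x ≤ 4*d+7) (hy : 0 ≤ y) (hy1 : y < s1+2*d+4)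
    (hxs : x = 4*d+7 → y < s1+1)
    (hx' : 0 ≤ x') (hx1' : x' ≤ 4*d+7) (hy' : 0 ≤ y')
    (heq : (2*d+3)*(x - x') + (4*d+8)*(y - y') = A) : False := by
  have hA4 : A + (2*d+3) = (4*d+8) * (s1+2*d+4) := by
    rw [hA]; linear_combination (d+2) * h4
  have hdvd : (4*d+8) ∣ (2*d+3) * (x - x' + 1) :=
    ⟨(s1+2*d+4) - (y - y'), by linear_combination heq + hA4⟩
  have hdvd2 : (4*d+8) ∣ (x - x' + 1) := ((Lcop d).symm).dvd_of_dvd_mul_left hdvd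
  obtain ⟨k, hk⟩ := hdvd2
  have hk01 : k = 0 ∨ k = 1 := by
    rcases le_or_gt k (-1) with hk' | hk'
    · nlinarith
    · rcases le_or_gt 2 k with hk'' | hk''
      · nlinarith
      · omega
  have h48 : (4*d+8) ≠ 0 := by positivity
  rcases hk01 with rfl | rfl
  · have hx0 : x - x' + 1 = 0 := by omega
    have h2 : (4*d+8) * (y - y') = (4*d+8) * (s1+2*d+4) := by
      linear_combination heq + hA4 - (2*d+3) * hx0
    have := mul_left_cancel₀ h48 h2
    omega
  · have hx0 : x - x' = 4*d+7 := by omega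
    have hxX : x = 4*d+7 := by omega
    have hys : y < s1+1 := hxs hxX
    have h2 : (4*d+8) * (y - y') = (4*d+8) * (s1+1) := by
      linear_combination heq + hA4 - (2*d+3) * hx0
    have := mul_left_cancel₀ h48 h2
    omega

private lemma L0 (d x y x' y' : ℤ) (hd : 1 ≤ d)
    (hx : 0 ≤ x) (hx1 : x ≤ 4*d+7) (hx' : 0 ≤ x') (hx1' : x' ≤ 4*d+7)
    (heq : (2*d+3)*(x - x') + (4*d+8)*(y - y') = 0) : x = x' ∧ y = y' := by
  have hdvd : (4*d+8) ∣ (2*d+3) * (x - x') := ⟨-(y - y'), by linear_combination heq⟩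
  have hdvd2 : (4*d+8) ∣ (x - x') := ((Lcop d).symm).dvd_of_dvd_mul_left hdvd
  obtain ⟨k, hk⟩ := hdvd2
  have hk0 : k = 0 := by
    rcases le_or_gt k (-1) with h | h
    · nlinarith
    · rcases le_or_gt 1 k with h' | h'
      · nlinarith
      · omega
  rcases hk0
  simp only [mul_zero] at hk
  have hxx : x = x' := by omega
  have h48 : (4*d+8) ≠ 0 := by positivity
  have h2 : (4*d+8) * (y - y') = (4*d+8) * 0 := by
    linear_combination heq - (2*d+3) * hxx
  have := mul_left_cancel₀ h48 h2
  exact ⟨hxx, by omega⟩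

private lemma Lbound (a d s1 A x y x' y' : ℤ) (ha : 5 ≤ a) (hd : 1 ≤ d)
    (hA : A = a*(d+2)*d+1) (h4 : a*d+2 = 4*(s1+2*d+4))
    (hx : 0 ≤ x) (hx1 : x ≤ 4*d+7) (hy : 0 ≤ y) (hy1 : y ≤ s1+2*d+3)
    (hx' : 0 ≤ x') (hx1' : x' ≤ 4*d+7) (hy' : 0 ≤ y') (hy1' : y' ≤ s1+2*d+3)
    (hs1 : 0 ≤ s1) :
    -(2*A) < (2*d+3)*(x - x') + (4*d+8)*(y - y') ∧
      (2*d+3)*(x - x') + (4*d+8)*(y - y') < 2*A := by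
  have h2A : 2*A = (8*s1+16*d+28)*(d+2) + 2 := by
    rw [hA]; linear_combination 2*(d+2)*h4
  have hdn : (0:ℤ) ≤ d := by linarith
  have e1 : (2*d+3)*(x-x') ≤ (2*d+3)*(4*d+7) :=
    mul_le_mul_of_nonneg_left (by linarith) (by linarith)
  have e2 : (4*d+8)*(y-y') ≤ (4*d+8)*(s1+2*d+3) :=
    mul_le_mul_of_nonneg_left (by linarith) (by linarith)
  have e3 : (2*d+3)*(-(4*d+7)) ≤ (2*d+3)*(x-x') :=
    mul_le_mul_of_nonneg_left (by linarith) (by linarith)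
  have e4 : (4*d+8)*(-(s1+2*d+3)) ≤ (4*d+8)*(y-y') :=
    mul_le_mul_of_nonneg_left (by linarith) (by linarith)
  constructor <;> nlinarith [e1, e2, e3, e4, h2A, mul_nonneg hs1 hdn]

private lemma Ltri (A t k : ℤ) (hA : 0 < A) (hk : t = A * k)
    (hlb : -(2*A) < t) (hub : t < 2*A) : k = -1 ∨ k = 0 ∨ k = 1 := by
  rcases le_or_gt k (-2) with h | h
  · nlinarith
  · rcases le_or_gt 2 k with h' | h'
    · nlinarith
    · omega

private lemma Lsum (N M B C : ℕ) :
    ∑ p ∈ Finset.range N ×ˢ Finset.range M, (p.1*B + p.2*C)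
      = M*(∑ x ∈ Finset.range N, x)*B + N*(∑ y ∈ Finset.range M, y)*C := by
  rw [Finset.sum_product]
  have inner : ∀ x, ∑ y ∈ Finset.range M, (x*B + y*C)
      = (M*B)*x + (∑ y ∈ Finset.range M, y)*C := by
    intro x
    rw [Finset.sum_add_distrib, Finset.sum_const, Finset.card_range, smul_eq_mul,
      ← Finset.sum_mul]
    ring
  rw [Finset.sum_congr rfl (fun x _ => inner x), Finset.sum_add_distrib, Finset.sum_const,
    Finset.card_range, smul_eq_mul, ← Finset.mul_sum]
  ring

private lemma Lsum2 (X s B C : ℕ) :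
    ∑ p ∈ ({X} : Finset ℕ) ×ˢ Finset.range s, (p.1*B + p.2*C)
      = s*(X*B) + (∑ y ∈ Finset.range s, y)*C := by
  rw [Finset.sum_product, Finset.sum_singleton]
  show ∑ y ∈ Finset.range s, (X*B + y*C) = _
  rw [Finset.sum_add_distrib, Finset.sum_const, Finset.card_range, smul_eq_mul,
    ← Finset.sum_mul]
set_option maxHeartbeats 1000000 in
theorem aux (a d s1 : ℕ) (ha : 5 ≤ a) (hd : 1 ≤ d)
    (h4 : a * d + 2 = 4 * (s1 + 2*d + 4)) :
    2 * (a*(d+2)*d+1) * sylvesterNumber {a*(d+2)*d+1, a*(d+2)*d+1 + a*(2*d+3), a*(d+2)*d+1 + a*(4*d+8)}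
      + (a*(d+2)*d+1) * (a*(d+2)*d)
    = (s1+2*d+4) * ((4*d+7)*(4*d+6)) * (a*(d+2)*d+1 + a*(2*d+3))
      + (4*d+7) * ((s1+2*d+4)*(s1+2*d+3)) * (a*(d+2)*d+1 + a*(4*d+8))
      + 2*(s1+1)*(4*d+7) * (a*(d+2)*d+1 + a*(2*d+3))
      + ((s1+1)*s1) * (a*(d+2)*d+1 + a*(4*d+8)) := by
  obtain ⟨A, hA⟩ : ∃ A', A' = a*(d+2)*d+1 := ⟨_, rfl⟩
  rw [← hA]
  obtain ⟨B, hB⟩ : ∃ B', B' = A + a*(2*d+3) := ⟨_, rfl⟩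
  rw [← hB]
  obtain ⟨C, hC⟩ : ∃ C', C' = A + a*(4*d+8) := ⟨_, rfl⟩
  rw [← hC]
  obtain ⟨c, hc⟩ : ∃ c', c' = s1+2*d+4 := ⟨_, rfl⟩
  rw [← hc]
  obtain ⟨s, hs⟩ : ∃ s', s' = s1+1 := ⟨_, rfl⟩
  rw [← hs]
  obtain ⟨X, hX⟩ : ∃ X', X' = 4*d+7 := ⟨_, rfl⟩
  rw [← hX]
  have hApos : 0 < A := by rw [hA]; positivity
  have h4z : (a:ℤ) * d + 2 = 4 * ((s1:ℤ) + 2*d + 4) := by exact_mod_cast h4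
  -- the three relations
  have R1 : (4*d+8)*B = (2*d+5)*A + (2*d+3)*C := by
    simp only [hB, hC, hA]; ring
  have R2 : c*C = (a+s1+2*d+3)*A + B := by
    simp only [hB, hC, hA, hc]; zify; linear_combination (-(a:ℤ)*((d:ℤ)+2)) * h4z
  have R3 : X*B + s*C = (a+s+X)*A := by
    simp only [hB, hC, hA, hc, hs, hX]; zify
    linear_combination (-(a:ℤ)*((d:ℤ)+2)) * h4z
  have hXA : X*c + s = A := by
    simp only [hA, hc, hs, hX]; zify; linear_combination (-((d:ℤ)+2)) * h4z
  obtain ⟨T, hT⟩ : ∃ T', T' = AddSubmonoid.closure ({A, B, C} : Set ℕ) := ⟨_, rfl⟩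
  rw [sylvesterNumber, ← hT]
  have hmemT : ∀ x y k : ℕ, x*B + y*C + k*A ∈ T := by
    intro x y k
    have hAT : A ∈ T := hT ▸ AddSubmonoid.subset_closure (by simp)
    have hBT : B ∈ T := hT ▸ AddSubmonoid.subset_closure (by simp)
    have hCT : C ∈ T := hT ▸ AddSubmonoid.subset_closure (by simp)
    have h1 : x*B ∈ T := by simpa [nsmul_eq_mul] using nsmul_mem hBT x
    have h2 : y*C ∈ T := by simpa [nsmul_eq_mul] using nsmul_mem hCT y
    have h3 : k*A ∈ T := by simpa [nsmul_eq_mul] using nsmul_mem hAT k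
    exact add_mem (add_mem h1 h2) h3
  have hrepT : ∀ m ∈ T, ∃ x y k, m = x*B + y*C + k*A := by
    rw [hT]
    intro m hm
    induction hm using AddSubmonoid.closure_induction with
    | mem g hg =>
      rcases hg with rfl | rfl | rfl
      · exact ⟨0,0,1, by ring⟩
      · exact ⟨1,0,0, by ring⟩
      · exact ⟨0,1,0, by ring⟩
    | zero => exact ⟨0,0,0, by ring⟩
    | add u v _ _ hu hv =>
      obtain ⟨x1,y1,k1,rfl⟩ := hu; obtain ⟨x2,y2,k2,rfl⟩ := hv
      exact ⟨x1+x2, y1+y2, k1+k2, by ring⟩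
  obtain ⟨w, hw⟩ : ∃ w', w' = fun (p : ℕ×ℕ) => p.1*B + p.2*C := ⟨_, rfl⟩
  obtain ⟨D, hD⟩ : ∃ D', D' =
    (Finset.range X ×ˢ Finset.range c) ∪ (({X} : Finset ℕ) ×ˢ Finset.range s) := ⟨_, rfl⟩
  have hmemD : ∀ p : ℕ×ℕ, p ∈ D ↔ ((p.1 < X ∧ p.2 < c) ∨ (p.1 = X ∧ p.2 < s)) := by
    intro p
    rw [hD, Finset.mem_union, Finset.mem_product, Finset.mem_product, Finset.mem_singleton,
      Finset.mem_range, Finset.mem_range, Finset.mem_range]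
  -- the reduction lemma
  have key : ∀ v x y, x*B + y*C ≤ v → ∃ p, p ∈ D ∧ ∃ j, x*B + y*C = w p + j*A := by
    intro v
    induction v using Nat.strong_induction_on with
    | _ v ih =>
      intro x y hv
      by_cases hy : y < c
      · by_cases hx : x < X
        · exact ⟨(x,y), (hmemD _).2 (Or.inl ⟨hx, hy⟩), 0, by simp [hw]⟩
        · by_cases hx' : x = X
          · by_cases hys : y < s
            · exact ⟨(x,y), (hmemD _).2 (Or.inr ⟨hx', hys⟩), 0, by simp [hw]⟩
            · obtain ⟨y', rfl⟩ : ∃ y', y = y' + s := ⟨y - s, by omega⟩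
              have heq : x*B + (y'+s)*C = y'*C + (a+s+X)*A := by
                rw [show x*B + (y'+s)*C = y'*C + (x*B + s*C) from by ring, hx', R3]
              have hpos : 0 < (a+s+X)*A := Nat.mul_pos (by omega) hApos
              have hlt : 0*B + y'*C < v := by
                have h2 : 0*B + y'*C < x*B + (y'+s)*C := by
                  rw [heq]; omega
                exact lt_of_lt_of_le h2 hv
              obtain ⟨p, hp, j, hj⟩ := ih _ hlt 0 y' le_rfl
              refine ⟨p, hp, j + (a+s+X), ?_⟩
              rw [heq, show y'*C = w p + j*A from by rw [← hj]; ring]; ring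
          · obtain ⟨x', rfl⟩ : ∃ x', x = x' + (4*d+8) := ⟨x - (4*d+8), by omega⟩
            have heq : (x'+(4*d+8))*B + y*C = (x'*B + (y+(2*d+3))*C) + (2*d+5)*A := by
              rw [show (x'+(4*d+8))*B + y*C = x'*B + y*C + (4*d+8)*B from by ring, R1]; ring
            have hpos : 0 < (2*d+5)*A := Nat.mul_pos (by omega) hApos
            have hlt : x'*B + (y+(2*d+3))*C < v := by
              have h2 : x'*B + (y+(2*d+3))*C < (x'+(4*d+8))*B + y*C := by rw [heq]; omega
              exact lt_of_lt_of_le h2 hv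
            obtain ⟨p, hp, j, hj⟩ := ih _ hlt x' (y+(2*d+3)) le_rfl
            exact ⟨p, hp, j + (2*d+5), by rw [heq, hj]; ring⟩
      · obtain ⟨y', rfl⟩ : ∃ y', y = y' + c := ⟨y - c, by omega⟩
        have heq : x*B + (y'+c)*C = ((x+1)*B + y'*C) + (a+s1+2*d+3)*A := by
          rw [show x*B + (y'+c)*C = x*B + y'*C + c*C from by ring, R2]; ring
        have hpos : 0 < (a+s1+2*d+3)*A := Nat.mul_pos (by omega) hApos
        have hlt : (x+1)*B + y'*C < v := by
          have h2 : (x+1)*B + y'*C < x*B + (y'+c)*C := by rw [heq]; omega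
          exact lt_of_lt_of_le h2 hv
        obtain ⟨p, hp, j, hj⟩ := ih _ hlt (x+1) y' le_rfl
        exact ⟨p, hp, j + (a+s1+2*d+3), by rw [heq, hj]; ring⟩
  -- injectivity of residues
  have hAz : ((A:ℤ)) = (a:ℤ)*((d:ℤ)+2)*(d:ℤ) + 1 := by rw [hA]; push_cast; ring
  have hinj : ∀ p ∈ D, ∀ q ∈ D, w p % A = w q % A → p = q := by
    intro p hp q hq hmd
    obtain ⟨hp1, hp2, hp3⟩ : p.1 ≤ X ∧ p.2 < c ∧ (p.1 = X → p.2 < s) := by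
      rcases (hmemD p).1 hp with ⟨h1,h2⟩ | ⟨h1,h2⟩ <;> exact ⟨by omega, by omega, by omega⟩
    obtain ⟨hq1, hq2, hq3⟩ : q.1 ≤ X ∧ q.2 < c ∧ (q.1 = X → q.2 < s) := by
      rcases (hmemD q).1 hq with ⟨h1,h2⟩ | ⟨h1,h2⟩ <;> exact ⟨by omega, by omega, by omega⟩
    have hdvd : (A:ℤ) ∣ ((w q : ℤ) - w p) := (Nat.modEq_iff_dvd).mp hmd
    have h1 : ((w q : ℤ) - w p) = (((q.1:ℤ)-p.1)+((q.2:ℤ)-p.2))*A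
        + a*((2*(d:ℤ)+3)*((q.1:ℤ) - p.1) + (4*(d:ℤ)+8)*((q.2:ℤ) - p.2)) := by
      rw [hw]; simp only [hB, hC, hA]; push_cast; ring
    have h2 : (A:ℤ) ∣ (a:ℤ)*((2*(d:ℤ)+3)*((q.1:ℤ) - p.1) + (4*(d:ℤ)+8)*((q.2:ℤ) - p.2)) := by
      have e : (a:ℤ)*((2*(d:ℤ)+3)*((q.1:ℤ) - p.1) + (4*(d:ℤ)+8)*((q.2:ℤ) - p.2))
          = ((w q : ℤ) - w p) - (((q.1:ℤ)-p.1)+((q.2:ℤ)-p.2))*A := by rw [h1]; ring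
      rw [e]
      exact dvd_sub hdvd (Dvd.intro_left _ rfl)
    have h3 : (A:ℤ) ∣ ((2*(d:ℤ)+3)*((q.1:ℤ) - p.1) + (4*(d:ℤ)+8)*((q.2:ℤ) - p.2)) := by
      have h4' := h2.mul_left ((d:ℤ)*((d:ℤ)+2))
      have h5 : (A:ℤ)*((2*(d:ℤ)+3)*((q.1:ℤ) - p.1) + (4*(d:ℤ)+8)*((q.2:ℤ) - p.2))
          - ((d:ℤ)*((d:ℤ)+2))*((a:ℤ)*((2*(d:ℤ)+3)*((q.1:ℤ) - p.1) + (4*(d:ℤ)+8)*((q.2:ℤ) - p.2)))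
          = ((2*(d:ℤ)+3)*((q.1:ℤ) - p.1) + (4*(d:ℤ)+8)*((q.2:ℤ) - p.2)) := by
        rw [hAz]; ring
      rw [← h5]
      exact dvd_sub (Dvd.intro _ rfl) h4'
    -- cast bounds
    have cb1 : ((p.1:ℤ)) ≤ 4*(d:ℤ)+7 := by
      have := hp1; rw [hX] at this; exact_mod_cast Nat.cast_le.mpr this
    have cb2 : ((q.1:ℤ)) ≤ 4*(d:ℤ)+7 := by
      have := hq1; rw [hX] at this; exact_mod_cast Nat.cast_le.mpr this
    have cb3 : ((p.2:ℤ)) ≤ (s1:ℤ)+2*(d:ℤ)+3 := by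
      have := hp2; rw [hc] at this; omega
    have cb4 : ((q.2:ℤ)) ≤ (s1:ℤ)+2*(d:ℤ)+3 := by
      have := hq2; rw [hc] at this; omega
    have n1 : (0:ℤ) ≤ (p.1:ℤ) := Int.natCast_nonneg _
    have n2 : (0:ℤ) ≤ (q.1:ℤ) := Int.natCast_nonneg _
    have n3 : (0:ℤ) ≤ (p.2:ℤ) := Int.natCast_nonneg _
    have n4 : (0:ℤ) ≤ (q.2:ℤ) := Int.natCast_nonneg _
    obtain ⟨hlb, hub⟩ := Lbound (a:ℤ) (d:ℤ) (s1:ℤ) (A:ℤ) (q.1:ℤ) (q.2:ℤ) (p.1:ℤ) (p.2:ℤ)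
      (by exact_mod_cast ha) (by exact_mod_cast hd) hAz h4z
      n2 cb2 n4 cb4 n1 cb1 n3 cb3 (Int.natCast_nonneg _)
    have hAzpos : (0:ℤ) < (A:ℤ) := by exact_mod_cast hApos
    obtain ⟨k, hk⟩ := h3
    have hk3 : k = -1 ∨ k = 0 ∨ k = 1 := Ltri _ _ _ hAzpos hk hlb hub
    have hsz : ((s:ℤ)) = (s1:ℤ)+1 := by rw [hs]; push_cast; ring
    have hcz : ((c:ℤ)) = (s1:ℤ)+2*(d:ℤ)+4 := by rw [hc]; push_cast; ring
    have hXz : ((X:ℤ)) = 4*(d:ℤ)+7 := by rw [hX]; push_cast; ring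
    have hp2z : ((p.2:ℤ)) < (s1:ℤ)+2*(d:ℤ)+4 := by
      have : ((p.2:ℤ)) < (c:ℤ) := by exact_mod_cast hp2
      omega
    have hq2z : ((q.2:ℤ)) < (s1:ℤ)+2*(d:ℤ)+4 := by
      have : ((q.2:ℤ)) < (c:ℤ) := by exact_mod_cast hq2
      omega
    have hp3z : (p.1:ℤ) = 4*(d:ℤ)+7 → (p.2:ℤ) < (s1:ℤ)+1 := by
      intro h
      have : p.1 = X := by omega
      have := hp3 this
      omega
    have hq3z : (q.1:ℤ) = 4*(d:ℤ)+7 → (q.2:ℤ) < (s1:ℤ)+1 := by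
      intro h
      have : q.1 = X := by omega
      have := hq3 this
      omega
    rcases hk3 with rfl | rfl | rfl
    · exact absurd (L1 (a:ℤ) (d:ℤ) (s1:ℤ) (A:ℤ) (p.1:ℤ) (p.2:ℤ) (q.1:ℤ) (q.2:ℤ)
          (by exact_mod_cast ha) (by exact_mod_cast hd) hAz h4z
          n1 cb1 n3 hp2z hp3z n2 cb2 n4
          (by linarith [hk])) (fun h => h)
    · obtain ⟨e1, e2⟩ := L0 (d:ℤ) (q.1:ℤ) (q.2:ℤ) (p.1:ℤ) (p.2:ℤ)
        (by exact_mod_cast hd) n2 cb2 n1 cb1 (by linarith [hk])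
      have f1 : p.1 = q.1 := by omega
      have f2 : p.2 = q.2 := by omega
      exact Prod.ext f1 f2
    · exact absurd (L1 (a:ℤ) (d:ℤ) (s1:ℤ) (A:ℤ) (q.1:ℤ) (q.2:ℤ) (p.1:ℤ) (p.2:ℤ)
          (by exact_mod_cast ha) (by exact_mod_cast hd) hAz h4z
          n2 cb2 n4 hq2z hq3z n1 cb1 n3
          (by linarith [hk])) (fun h => h)
  -- cardinality of D
  have hdisj : Disjoint (Finset.range X ×ˢ Finset.range c) (({X} : Finset ℕ) ×ˢ Finset.range s) := by
    rw [Finset.disjoint_left]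
    intro p h1 h2
    rw [Finset.mem_product, Finset.mem_range, Finset.mem_range] at h1
    rw [Finset.mem_product, Finset.mem_singleton] at h2
    omega
  have hcardD : D.card = A := by
    rw [hD, Finset.card_union_of_disjoint hdisj, Finset.card_product, Finset.card_product,
      Finset.card_range, Finset.card_range, Finset.card_range, Finset.card_singleton, one_mul]
    exact hXA
  have hinj' : Set.InjOn (fun p => w p % A) ↑D := fun p hp q hq h =>
    hinj p (Finset.mem_coe.mp hp) q (Finset.mem_coe.mp hq) h
  have himg : D.image (fun p => w p % A) = Finset.range A := by
    apply Finset.eq_of_subset_of_card_le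
    · intro r hr
      rw [Finset.mem_image] at hr
      obtain ⟨p, _, rfl⟩ := hr
      exact Finset.mem_range.mpr (Nat.mod_lt _ hApos)
    · rw [Finset.card_range, Finset.card_image_of_injOn hinj', hcardD]
  have hkA : ∀ p k, k ≤ w p / A → k*A ≤ w p := fun p k hk =>
    le_trans (Nat.mul_le_mul_right A hk) (Nat.div_mul_le_self _ _)
  -- the gap set
  obtain ⟨F, hF⟩ : ∃ F', F' = (D.sigma (fun p => Finset.Icc 1 (w p / A))).image
      (fun t => w t.1 - t.2 * A) := ⟨_, rfl⟩
  have hmemF : ∀ m, m ∈ F ↔ ∃ p ∈ D, ∃ k, 1 ≤ k ∧ k ≤ w p / A ∧ m = w p - k * A := by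
    intro m
    rw [hF]
    constructor
    · intro h
      rw [Finset.mem_image] at h
      obtain ⟨t, ht, rfl⟩ := h
      rw [Finset.mem_sigma] at ht
      exact ⟨t.1, ht.1, t.2, (Finset.mem_Icc.mp ht.2).1, (Finset.mem_Icc.mp ht.2).2, rfl⟩
    · rintro ⟨p, hp, k, h1, h2, rfl⟩
      rw [Finset.mem_image]
      exact ⟨⟨p,k⟩, Finset.mem_sigma.mpr ⟨hp, Finset.mem_Icc.mpr ⟨h1,h2⟩⟩, rfl⟩
  have hgap : ∀ m, m ∈ F ↔ m ∉ T := by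
    intro m
    rw [hmemF m]
    constructor
    · rintro ⟨p, hp, k, hk1, hk2, rfl⟩ hmem
      obtain ⟨x,y,j,hm⟩ := hrepT _ hmem
      obtain ⟨p', hp', j', hj'⟩ := key (x*B+y*C) x y le_rfl
      have hkA' : k*A ≤ w p := hkA p k hk2
      have hm2 : w p - k*A = w p' + (j'+j)*A := by
        rw [hm, hj']; ring
      have heq3 : w p = w p' + (j'+j)*A + k*A := by omega
      have hmod2 : w p % A = w p' % A := by
        rw [heq3, Nat.add_mul_mod_self_right, Nat.add_mul_mod_self_right]
      have hpp : p = p' := hinj p hp p' hp' hmod2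
      rw [← hpp] at heq3
      have hge : 1*A ≤ k*A := Nat.mul_le_mul_right A hk1
      omega
    · intro hm
      have hr : m % A ∈ Finset.range A := Finset.mem_range.mpr (Nat.mod_lt _ hApos)
      rw [← himg, Finset.mem_image] at hr
      obtain ⟨p, hp, hpr⟩ := hr
      have e1 := Nat.div_add_mod m A
      have e2 := Nat.div_add_mod (w p) A
      rcases le_or_gt (w p / A) (m / A) with hle | hlt
      · exfalso
        obtain ⟨δ, hδ⟩ : ∃ δ, m / A = w p / A + δ := ⟨_, (Nat.add_sub_cancel' hle).symm⟩
        apply hm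
        have hm3 : m = w p + δ*A := by
          rw [← e1, ← e2, hδ, hpr]; ring
        have hm4 : w p + δ*A = p.1*B + p.2*C + δ*A := by rw [hw]
        rw [hm3, hm4]
        exact hmemT p.1 p.2 δ
      · obtain ⟨δ, hδ⟩ : ∃ δ, w p / A = m / A + δ := ⟨_, (Nat.add_sub_cancel' hlt.le).symm⟩
        have hδ1 : 1 ≤ δ := by omega
        refine ⟨p, hp, δ, hδ1, hδ ▸ Nat.le_add_left δ (m / A), ?_⟩
        have hwm : w p = m + δ*A := by rw [← e1, ← e2, hδ, hpr]; ring
        rw [hwm]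
        simp
  have hsetF : {m : ℕ | m ∉ T} = ↑F := by
    ext m
    simp only [Set.mem_setOf_eq, Finset.mem_coe]
    exact ⟨fun h => (hgap m).mpr h, fun h => (hgap m).mp h⟩
  rw [hsetF, Set.ncard_coe_finset]
  -- cardinality of F
  have hinjF : Set.InjOn (fun t : (_ : ℕ×ℕ) × ℕ => w t.1 - t.2*A)
      ↑(D.sigma (fun p => Finset.Icc 1 (w p / A))) := by
    rintro ⟨p,k⟩ h1 ⟨p',k'⟩ h2 he
    rw [Finset.mem_coe, Finset.mem_sigma, Finset.mem_Icc] at h1 h2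
    simp only at he
    have hkA1 : k*A ≤ w p := hkA p k h1.2.2
    have hkA2 : k'*A ≤ w p' := hkA p' k' h2.2.2
    have heq : w p + k'*A = w p' + k*A := by omega
    have hmod : w p % A = w p' % A := by
      calc w p % A = (w p + k'*A) % A := (Nat.add_mul_mod_self_right _ _ _).symm
        _ = (w p' + k*A) % A := by rw [heq]
        _ = w p' % A := Nat.add_mul_mod_self_right _ _ _
    have hpp : p = p' := hinj p h1.1 p' h2.1 hmod
    subst hpp
    have hkk : k = k' := by
      have : k*A = k'*A := by omega
      exact Nat.eq_of_mul_eq_mul_right hApos this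
    simp [hkk]
  have hFcard : F.card = ∑ p ∈ D, (w p / A) := by
    rw [hF, Finset.card_image_of_injOn hinjF, Finset.card_sigma]
    refine Finset.sum_congr rfl fun p _ => ?_
    rw [Nat.card_Icc]
    simp
  rw [hFcard]
  -- sums
  have h1 : ∑ p ∈ D, w p = A * (∑ p ∈ D, (w p / A)) + ∑ p ∈ D, (w p % A) := by
    rw [Finset.mul_sum, ← Finset.sum_add_distrib]
    exact Finset.sum_congr rfl fun p _ => (Nat.div_add_mod (w p) A).symm
  have h2 : ∑ p ∈ D, (w p % A) = ∑ r ∈ Finset.range A, r := by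
    conv_rhs => rw [← himg]
    rw [Finset.sum_image (fun p hp q hq h => hinj p hp q hq h)]
  have hA1 : A - 1 = a*(d+2)*d := by omega
  have h3 : 2 * (∑ r ∈ Finset.range A, r) = A * (a*(d+2)*d) := by
    calc 2 * (∑ r ∈ Finset.range A, r) = (∑ r ∈ Finset.range A, r) * 2 := by ring
      _ = A * (A-1) := Finset.sum_range_id_mul_two A
      _ = A * (a*(d+2)*d) := by rw [hA1]
  -- closed form of the sum of w over D
  have g1 : (∑ x ∈ Finset.range X, x) * 2 = X*(4*d+6) := by
    rw [Finset.sum_range_id_mul_two, show X - 1 = 4*d+6 from by omega]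
  have g2 : (∑ y ∈ Finset.range c, y) * 2 = c*(s1+2*d+3) := by
    rw [Finset.sum_range_id_mul_two, show c - 1 = s1+2*d+3 from by omega]
  have g3 : (∑ y ∈ Finset.range s, y) * 2 = s*s1 := by
    rw [Finset.sum_range_id_mul_two, show s - 1 = s1 from by omega]
  have hsum : 2 * (∑ p ∈ D, w p)
      = c * (X*(4*d+6)) * B + X * (c*(s1+2*d+3)) * C
        + 2*s*X * B + (s*s1) * C := by
    have e0 : ∑ p ∈ D, w p = (c*(∑ x ∈ Finset.range X, x)*B + X*(∑ y ∈ Finset.range c, y)*C)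
        + (s*(X*B) + (∑ y ∈ Finset.range s, y)*C) := by
      rw [hD, Finset.sum_union hdisj]
      simp only [hw]
      rw [Lsum X c B C, Lsum2 X s B C]
    rw [e0]
    calc 2*((c*(∑ x ∈ Finset.range X, x)*B + X*(∑ y ∈ Finset.range c, y)*C)
          + (s*(X*B) + (∑ y ∈ Finset.range s, y)*C))
        = c*((∑ x ∈ Finset.range X, x)*2)*B + X*((∑ y ∈ Finset.range c, y)*2)*C
          + 2*s*X*B + ((∑ y ∈ Finset.range s, y)*2)*C := by ring
      _ = c*(X*(4*d+6))*B + X*(c*(s1+2*d+3))*C + 2*s*X*B + (s*s1)*C := by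
          rw [g1, g2, g3]
  -- final assembly
  have h4' : A * (a*(d+2)*d) = 2 * (∑ p ∈ D, (w p % A)) := by rw [h2, ← h3]
  calc 2 * A * (∑ p ∈ D, (w p / A)) + A * (a*(d+2)*d)
      = 2 * (A * (∑ p ∈ D, (w p / A)) + (∑ p ∈ D, (w p % A))) := by
        rw [h4']; ring
    _ = 2 * (∑ p ∈ D, w p) := by rw [← h1]
    _ = c * (X*(4*d+6)) * B + X * (c*(s1+2*d+3)) * C
        + 2*s*X * B + (s*s1) * C := hsum

private lemma Lfinal (aq dq sq Gq : ℚ) (hd : 1 ≤ dq) (hsq : 0 ≤ sq)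
    (h4 : aq*dq = 4*sq+8*dq+14)
    (H : 2*(aq*(dq+2)*dq+1)*Gq + (aq*(dq+2)*dq+1)*(aq*(dq+2)*dq)
        = (sq+2*dq+4)*((4*dq+7)*(4*dq+6))*(aq*(dq+2)*dq+1 + aq*(2*dq+3))
          + (4*dq+7)*((sq+2*dq+4)*(sq+2*dq+3))*(aq*(dq+2)*dq+1 + aq*(4*dq+8))
          + 2*(sq+1)*(4*dq+7)*(aq*(dq+2)*dq+1 + aq*(2*dq+3))
          + ((sq+1)*sq)*(aq*(dq+2)*dq+1 + aq*(4*dq+8))) :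
    Gq = ((aq^2+16*aq)*(dq+2)^3 - (12*aq+16)*(dq+2)^2 - (4*aq^2+14*aq-20)*(dq+2)
      + 4*aq - 4)/8 := by
  have hdq : (0:ℚ) < dq := by linarith
  have haqpos : 0 < aq := by nlinarith
  have hApos : 0 < aq*(dq+2)*dq+1 := by nlinarith
  rw [eq_div_iff (by norm_num : (8:ℚ) ≠ 0)]
  have hne : (dq^2*(2*(aq*(dq+2)*dq+1))) ≠ 0 :=
    mul_ne_zero (pow_ne_zero 2 (ne_of_gt hdq)) (by linarith)
  apply mul_left_cancel₀ hne
  linear_combination (8*dq^2) * H +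
    ((-156)*dq^2 + (-16)*dq^2*sq + (-172)*dq^3 + (-8)*dq^3*sq + (-48)*dq^4
      + (-688)*aq*dq^2 + (-128)*aq*dq^2*sq + (-1492)*aq*dq^3 + (-160)*aq*dq^3*sq
      + (-1174)*aq*dq^4 + (-64)*aq*dq^4*sq + (-396)*aq*dq^5 + (-8)*aq*dq^5*sq
      + (-48)*aq*dq^6 + (-32)*aq^2*dq^3 + (-40)*aq^2*dq^4 + (-16)*aq^2*dq^5
      + (-2)*aq^2*dq^6) * h4

theorem sylvester_twoStepStar_case4 (a n : ℕ) (ha : 5 ≤ a) (hn : 3 ≤ n) (hbig : 8 * n - 2 ≤ a * (n - 2)) (hmod : (a % 4 = 1 ∧ n % 4 = 0) ∨ (a % 4 = 2 ∧ n % 2 = 1) ∨ (a % 4 = 3 ∧ n % 4 = 0)) :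
    (sylvesterNumber
        {twoStepStar a n, twoStepStar a (n + 1), twoStepStar a (n + 2)} : ℚ) =
      (((a : ℚ) ^ 2 + 16 * a) * n ^ 3 - (12 * (a : ℚ) + 16) * n ^ 2 - (4 * (a : ℚ) ^ 2 + 14 * a - 20) * n + 4 * a - 4) / 8 := by
  obtain ⟨d, rfl⟩ : ∃ d, n = d + 2 := ⟨n - 2, by omega⟩
  have hd : 1 ≤ d := by omega
  have hm2 : (a * d) % 4 = 2 := by
    rcases hmod with ⟨h1, h2⟩ | ⟨h1, h2⟩ | ⟨h1, h2⟩ <;>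
      · rw [Nat.mul_mod, h1]; omega
  have e : d + 2 - 2 = d := by omega
  rw [e] at hbig
  obtain ⟨t, ht⟩ : ∃ t, a * d = t := ⟨_, rfl⟩
  rw [ht] at hbig hm2
  obtain ⟨s1, hs1⟩ : ∃ s1, t + 2 = 4*(s1 + 2*d + 4) := ⟨(t+2)/4 - (2*d+4), by omega⟩
  have h4 : a * d + 2 = 4*(s1+2*d+4) := by rw [ht]; exact hs1
  have e1 : twoStepStar a (d+2) = a*(d+2)*d+1 := by
    unfold twoStepStar; rw [e]
  have e2 : twoStepStar a (d+2+1) = a*(d+2)*d+1 + a*(2*d+3) := by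
    unfold twoStepStar
    rw [show d+2+1-2 = d+1 from by omega]; ring
  have e3 : twoStepStar a (d+2+2) = a*(d+2)*d+1 + a*(4*d+8) := by
    unfold twoStepStar
    rw [show d+2+2-2 = d+2 from by omega]; ring
  rw [e1, e2, e3]
  have H := aux a d s1 ha hd h4
  have HQ : 2*((a:ℚ)*((d:ℚ)+2)*(d:ℚ)+1)
        * (sylvesterNumber {a*(d+2)*d+1, a*(d+2)*d+1 + a*(2*d+3), a*(d+2)*d+1 + a*(4*d+8)} : ℚ)
        + ((a:ℚ)*((d:ℚ)+2)*(d:ℚ)+1)*((a:ℚ)*((d:ℚ)+2)*(d:ℚ))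
      = ((s1:ℚ)+2*(d:ℚ)+4)*((4*(d:ℚ)+7)*(4*(d:ℚ)+6))
          *((a:ℚ)*((d:ℚ)+2)*(d:ℚ)+1 + (a:ℚ)*(2*(d:ℚ)+3))
        + (4*(d:ℚ)+7)*(((s1:ℚ)+2*(d:ℚ)+4)*((s1:ℚ)+2*(d:ℚ)+3))
          *((a:ℚ)*((d:ℚ)+2)*(d:ℚ)+1 + (a:ℚ)*(4*(d:ℚ)+8))
        + 2*((s1:ℚ)+1)*(4*(d:ℚ)+7)*((a:ℚ)*((d:ℚ)+2)*(d:ℚ)+1 + (a:ℚ)*(2*(d:ℚ)+3))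
        + (((s1:ℚ)+1)*(s1:ℚ))*((a:ℚ)*((d:ℚ)+2)*(d:ℚ)+1 + (a:ℚ)*(4*(d:ℚ)+8)) := by
    exact_mod_cast H
  have h4q : (a:ℚ)*(d:ℚ) = 4*(s1:ℚ)+8*(d:ℚ)+14 := by
    have h5 : a*d = 4*s1+8*d+14 := by omega
    exact_mod_cast h5
  have hL := Lfinal (a:ℚ) (d:ℚ) (s1:ℚ) _ (by exact_mod_cast hd) (by positivity) h4q HQ
  push_cast
  rw [hL]
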